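/- Let n be a positive integer. Define g : ℝⁿ → ℝ by g(x) = ∑ i, (log(1 + |x i|) - |x i| / (2 + 2|x i|)). Then for every fixed u ∈ ℝⁿ, the function h(x) = g(x) + (1/2)‖x - u‖² is convex on ℝⁿ. -/

import Mathlib

open Real

noncomputable def Fphi : ℝ → ℝ := fun s => Real.log (1 + s) - s / (2 + 2 * s) + s ^ 2 / 2

lemma Fphi_hasDeriv {s : ℝ} (hs : -1 < s) :
    HasDerivAt Fphi (1 / (1 + s) - 2 / (2 + 2 * s) ^ 2 + s) s := by
  have h1 : (1 : ℝ) + s ≠ 0 := by linarith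
  have h2 : (2 : ℝ) + 2 * s ≠ 0 := by linarith
  have hlog : HasDerivAt (fun t : ℝ => Real.log (1 + t)) (1 / (1 + s)) s := by
    have := (Real.hasDerivAt_log h1).comp s ((hasDerivAt_id s).const_add 1)
    exact this.congr_deriv (by simp)
  have hden : HasDerivAt (fun t : ℝ => 2 + 2 * t) 2 s := by
    simpa using ((hasDerivAt_id s).const_mul 2).const_add 2
  have hdiv : HasDerivAt (fun t : ℝ => t / (2 + 2 * t)) (2 / (2 + 2 * s) ^ 2) s := by
    have := (hasDerivAt_id s).div hden h2
    exact this.congr_deriv (by simp only [id]; ring)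
  have hsq : HasDerivAt (fun t : ℝ => t ^ 2 / 2) s s := by
    have := (hasDerivAt_pow 2 s).div_const 2
    simpa using this
  exact (hlog.sub hdiv).add hsq

lemma Fphi_hasDeriv2 {s : ℝ} (hs : -1 < s) :
    HasDerivAt (fun t : ℝ => 1 / (1 + t) - 2 / (2 + 2 * t) ^ 2 + t)
      (-1 / (1 + s) ^ 2 + 8 / (2 + 2 * s) ^ 3 + 1) s := by
  have h1 : (1 : ℝ) + s ≠ 0 := by linarith
  have h2 : (2 : ℝ) + 2 * s ≠ 0 := by linarith
  have hA : HasDerivAt (fun t : ℝ => 1 / (1 + t)) (-1 / (1 + s) ^ 2) s := by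
    have := (hasDerivAt_const s (1 : ℝ)).div ((hasDerivAt_id s).const_add 1) h1
    exact this.congr_deriv (by simp only [id]; ring)
  have hden : HasDerivAt (fun t : ℝ => 2 + 2 * t) 2 s := by
    simpa using ((hasDerivAt_id s).const_mul 2).const_add 2
  have hB : HasDerivAt (fun t : ℝ => 2 / (2 + 2 * t) ^ 2) (-8 / (2 + 2 * s) ^ 3) s := by
    have hpow : HasDerivAt (fun t : ℝ => (2 + 2 * t) ^ 2) (2 * (2 + 2 * s) ^ 1 * 2) s :=
      (HasDerivAt.pow hden 2).congr_deriv (by norm_num)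
    have hne : ((2 : ℝ) + 2 * s) ^ 2 ≠ 0 := pow_ne_zero _ h2
    have := (hasDerivAt_const s (2 : ℝ)).div hpow hne
    exact this.congr_deriv (by field_simp; ring)
  have := (hA.sub hB).add (hasDerivAt_id s)
  exact this.congr_deriv (by ring)

lemma Fphi_contOn : ContinuousOn Fphi (Set.Ici 0) := by
  intro x hx
  have hx' : (-1 : ℝ) < x := lt_of_lt_of_le (by norm_num) hx
  exact (Fphi_hasDeriv hx').continuousAt.continuousWithinAt

lemma Fphi_convexOn : ConvexOn ℝ (Set.Ici 0) Fphi := by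
  apply convexOn_of_hasDerivWithinAt2_nonneg (convex_Ici 0) Fphi_contOn
    (f' := fun t => 1 / (1 + t) - 2 / (2 + 2 * t) ^ 2 + t)
    (f'' := fun t => -1 / (1 + t) ^ 2 + 8 / (2 + 2 * t) ^ 3 + 1)
  · intro x hx
    rw [interior_Ici] at hx
    exact (Fphi_hasDeriv (by linarith [Set.mem_Ioi.mp hx])).hasDerivWithinAt
  · intro x hx
    rw [interior_Ici] at hx
    exact (Fphi_hasDeriv2 (by linarith [Set.mem_Ioi.mp hx])).hasDerivWithinAt
  · intro x hx
    rw [interior_Ici] at hx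
    have hx' : (0 : ℝ) < x := hx
    have h1 : (0 : ℝ) < 1 + x := by linarith
    have key : -1 / (1 + x) ^ 2 + 8 / (2 + 2 * x) ^ 3 + 1
        = ((1 + x) ^ 3 - (1 + x) + 1) / (1 + x) ^ 3 := by
      have h2 : (2 : ℝ) + 2 * x ≠ 0 := by linarith
      field_simp
      ring
    rw [key]
    apply div_nonneg _ (by positivity)
    nlinarith

lemma Fphi_monotoneOn : MonotoneOn Fphi (Set.Ici 0) := by
  apply monotoneOn_of_deriv_nonneg (convex_Ici 0) Fphi_contOn
  · intro x hx
    rw [interior_Ici] at hx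
    exact ((Fphi_hasDeriv (by linarith [Set.mem_Ioi.mp hx])).differentiableAt).differentiableWithinAt
  · intro x hx
    rw [interior_Ici] at hx
    have hx' : (0 : ℝ) < x := hx
    rw [(Fphi_hasDeriv (by linarith : (-1:ℝ) < x)).deriv]
    have h1 : (0 : ℝ) < 1 + x := by linarith
    have key : 1 / (1 + x) - 2 / (2 + 2 * x) ^ 2 = (1 + 2 * x) / (2 * (1 + x) ^ 2) := by
      have h2 : (2 : ℝ) + 2 * x ≠ 0 := by linarith
      field_simp
      ring
    rw [key]
    positivity

lemma psi_convexOn : ConvexOn ℝ Set.univ (fun t : ℝ => Fphi |t|) := by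
  have himg : (fun t : ℝ => |t|) '' Set.univ = Set.Ici 0 := by
    ext t
    simp only [Set.image_univ, Set.mem_range, Set.mem_Ici]
    constructor
    · rintro ⟨y, rfl⟩; exact abs_nonneg y
    · intro ht; exact ⟨t, abs_of_nonneg ht⟩
  have habs : ConvexOn ℝ Set.univ (fun t : ℝ => |t|) := by
    exact (convexOn_univ_norm : ConvexOn ℝ Set.univ (‖·‖ : ℝ → ℝ))
  exact ConvexOn.comp (himg ▸ Fphi_convexOn) habs (himg ▸ Fphi_monotoneOn)

lemma affine_convexOn (c d : ℝ) : ConvexOn ℝ Set.univ (fun t : ℝ => c * t + d) := by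
  refine ⟨convex_univ, fun x _ y _ a b ha hb hab => le_of_eq ?_⟩
  simp only [smul_eq_mul]
  linear_combination (-d) * hab

lemma convexOn_sum' {E : Type*} [AddCommGroup E] [Module ℝ E] {ι : Type*} (s : Finset ι)
    (f : ι → E → ℝ) (h : ∀ i ∈ s, ConvexOn ℝ Set.univ (f i)) :
    ConvexOn ℝ Set.univ (fun x => ∑ i ∈ s, f i x) := by
  classical
  induction s using Finset.induction with
  | empty => simpa using convexOn_const (0 : ℝ) convex_univ
  | @insert a s ha ih =>
    simp only [Finset.sum_insert ha]
    exact (h a (Finset.mem_insert_self a s)).add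
      (ih fun i hi => h i (Finset.mem_insert_of_mem hi))

lemma comp_proj {n : ℕ} {φ : ℝ → ℝ} (hφ : ConvexOn ℝ Set.univ φ) (i : Fin n) :
    ConvexOn ℝ Set.univ (fun x : EuclideanSpace ℝ (Fin n) => φ (x i)) := by
  refine ⟨convex_univ, fun x _ y _ a b ha hb hab => ?_⟩
  have := hφ.2 (Set.mem_univ (x i)) (Set.mem_univ (y i)) ha hb hab
  simpa [PiLp.add_apply, PiLp.smul_apply, smul_eq_mul] using this

theorem stmt_10 (n : ℕ) (hn : 0 < n)
    (g : EuclideanSpace ℝ (Fin n) → ℝ)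
    (hg : ∀ x, g x = ∑ i, (Real.log (1 + |x i|) - |x i| / (2 + 2 * |x i|)))
    (u : EuclideanSpace ℝ (Fin n)) :
    ConvexOn ℝ Set.univ (fun x => g x + (1 / 2) * ‖x - u‖ ^ 2) := by
  have heq : (fun x : EuclideanSpace ℝ (Fin n) => g x + (1 / 2) * ‖x - u‖ ^ 2)
      = fun x => ∑ i, (Fphi |x i| + (-(u i) * (x i) + (u i) ^ 2 / 2)) := by
    funext x
    rw [hg x, PiLp.norm_sq_eq_of_L2, Finset.mul_sum, ← Finset.sum_add_distrib]
    refine Finset.sum_congr rfl fun i _ => ?_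
    simp only [Fphi, PiLp.sub_apply, Real.norm_eq_abs, sq_abs]
    ring
  rw [heq]
  apply convexOn_sum'
  intro i _
  exact comp_proj (psi_convexOn.add (affine_convexOn (-(u i)) ((u i) ^ 2 / 2))) i
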